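/- Let f, g : [xA, xB] → ℝ be convex, continuously differentiable functions with f(xA) = g(xA), f(xB) = g(xB), and f(x) > g(x) for all x ∈ (xA, xB). Then the arc length of the graph of f is at most the arc length of the graph of g. -/

import Mathlib

open MeasureTheory Set intervalIntegral

/-- Convexity inequality for `t ↦ √(1+t²)`: tangent line at `a` lies below the graph. -/
private lemma sqrt_one_add_sq_convex (a b : ℝ) :
    Real.sqrt (1 + a ^ 2) + a / Real.sqrt (1 + a ^ 2) * (b - a) ≤ Real.sqrt (1 + b ^ 2) := by
  have hsa : (0:ℝ) < Real.sqrt (1 + a ^ 2) := Real.sqrt_pos.2 (by positivity)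
  have hsa2 : Real.sqrt (1 + a ^ 2) ^ 2 = 1 + a ^ 2 := Real.sq_sqrt (by positivity)
  have key : 1 + a * b ≤ Real.sqrt (1 + a ^ 2) * Real.sqrt (1 + b ^ 2) := by
    rcases le_or_gt (1 + a * b) 0 with hc | hc
    · exact hc.trans (by positivity)
    · calc 1 + a * b = Real.sqrt ((1 + a * b) ^ 2) := (Real.sqrt_sq hc.le).symm
        _ ≤ Real.sqrt ((1 + a ^ 2) * (1 + b ^ 2)) :=
            Real.sqrt_le_sqrt (by nlinarith [sq_nonneg (a - b)])
        _ = Real.sqrt (1 + a ^ 2) * Real.sqrt (1 + b ^ 2) := Real.sqrt_mul (by positivity) _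
  have hrw : Real.sqrt (1 + a ^ 2) + a / Real.sqrt (1 + a ^ 2) * (b - a)
      = (1 + a * b) / Real.sqrt (1 + a ^ 2) := by
    field_simp
    nlinarith [hsa2]
  rw [hrw, div_le_iff₀ hsa]
  nlinarith [key]

private lemma monotone_div_sqrt : Monotone (fun t : ℝ => t / Real.sqrt (1 + t ^ 2)) := by
  intro s t hst
  simp only
  have hs : (0:ℝ) < Real.sqrt (1 + s ^ 2) := Real.sqrt_pos.2 (by positivity)
  have ht : (0:ℝ) < Real.sqrt (1 + t ^ 2) := Real.sqrt_pos.2 (by positivity)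
  have hs2 : Real.sqrt (1 + s ^ 2) ^ 2 = 1 + s ^ 2 := Real.sq_sqrt (by positivity)
  have ht2 : Real.sqrt (1 + t ^ 2) ^ 2 = 1 + t ^ 2 := Real.sq_sqrt (by positivity)
  rw [div_le_div_iff₀ hs ht]
  rcases le_or_gt s 0 with hs0 | hs0
  · rcases le_or_gt t 0 with ht0 | ht0
    · -- both nonpositive
      have h1 : (0:ℝ) ≤ (-s) * Real.sqrt (1 + t ^ 2) :=
        mul_nonneg (neg_nonneg.2 hs0) ht.le
      have h2 : (0:ℝ) ≤ (-t) * Real.sqrt (1 + s ^ 2) :=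
        mul_nonneg (neg_nonneg.2 ht0) hs.le
      have hsq : ((-t) * Real.sqrt (1 + s ^ 2)) ^ 2 ≤ ((-s) * Real.sqrt (1 + t ^ 2)) ^ 2 := by
        nlinarith [mul_self_nonneg (s*t)]
      have := Real.sqrt_le_sqrt hsq
      rw [Real.sqrt_sq h2, Real.sqrt_sq h1] at this
      nlinarith
    · nlinarith [mul_nonneg ht0.le hs.le, mul_nonneg (neg_nonneg.2 hs0) ht.le]
  · have ht0 : 0 < t := lt_of_lt_of_le hs0 hst
    have h1 : (0:ℝ) ≤ s * Real.sqrt (1 + t ^ 2) := by positivity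
    have h2 : (0:ℝ) ≤ t * Real.sqrt (1 + s ^ 2) := by positivity
    have hsq : (s * Real.sqrt (1 + t ^ 2)) ^ 2 ≤ (t * Real.sqrt (1 + s ^ 2)) ^ 2 := by
      nlinarith [mul_self_nonneg (s*t)]
    have := Real.sqrt_le_sqrt hsq
    rwa [Real.sqrt_sq h1, Real.sqrt_sq h2] at this

/-- Key integration-by-parts inequality: if `ψ` is monotone continuous, `h` vanishes at the
endpoints, is nonpositive on `[a,b]` and has derivative `H`, then `∫ ψ H ≥ 0`. -/
private lemma integral_monotone_mul_deriv_nonneg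
    {a b : ℝ} (hab : a < b) {ψ H h : ℝ → ℝ} {C : ℝ}
    (hψm : Monotone ψ) (hψc : Continuous ψ) (hHc : Continuous H)
    (hbd : ∀ x, |H x| ≤ C)
    (hhc : ContinuousOn h (Icc a b))
    (hder : ∀ x ∈ Ioo a b, HasDerivAt h (H x) x)
    (ha : h a = 0) (hb : h b = 0) (hneg : ∀ x ∈ Icc a b, h x ≤ 0) :
    0 ≤ ∫ x in a..b, ψ x * H x := by
  set S : StieltjesFunction ℝ :=
    { toFun := ψ, mono' := hψm,
      right_continuous' := fun x => (hψc.continuousAt).continuousWithinAt } with hS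
  set ν := S.measure.restrict (Ioc a b) with hν
  haveI hfin : IsFiniteMeasure ν := by
    constructor
    rw [hν, Measure.restrict_apply_univ, S.measure_Ioc]
    exact ENNReal.ofReal_lt_top
  haveI hfin2 : IsFiniteMeasure (volume.restrict (Ioc a b)) := by
    constructor
    rw [Measure.restrict_apply_univ, Real.volume_Ioc]
    exact ENNReal.ofReal_lt_top
  set Φ : ℝ × ℝ → ℝ := fun p => ({p : ℝ × ℝ | p.2 ≤ p.1}).indicator (fun p => H p.1) p with hΦ
  have hsm : MeasurableSet {p : ℝ × ℝ | p.2 ≤ p.1} := measurableSet_le measurable_snd measurable_fst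
  have hΦeval : ∀ q : ℝ × ℝ, Φ q = if q.2 ≤ q.1 then H q.1 else 0 := by
    intro q
    rw [hΦ]
    simp [Set.indicator_apply, Set.mem_setOf_eq]
  -- FTC
  have hFTC : ∀ t ∈ Icc a b, ∫ x in t..b, H x = - h t := by
    intro t ht
    have := intervalIntegral.integral_eq_sub_of_hasDeriv_right_of_le ht.2
      (hhc.mono (Icc_subset_Icc ht.1 le_rfl))
      (fun x hx => (hder x ⟨lt_of_le_of_lt ht.1 hx.1, hx.2⟩).hasDerivWithinAt)
      (hHc.intervalIntegrable t b)
    rw [this, hb]; ring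
  have hC0 : 0 ≤ C := le_trans (abs_nonneg _) (hbd 0)
  have hΦint : Integrable Φ ((volume.restrict (Ioc a b)).prod ν) := by
    refine Integrable.mono' (integrable_const C)
      (((hHc.comp continuous_fst).stronglyMeasurable.indicator hsm).aestronglyMeasurable)
      (Filter.Eventually.of_forall fun p => ?_)
    rw [hΦeval p]
    split_ifs
    · simpa [Real.norm_eq_abs] using hbd p.1
    · simpa using hC0
  have hIntH : IntervalIntegrable H volume a b := hHc.intervalIntegrable a b
  have hInt1 : IntervalIntegrable (fun x => ψ x * H x) volume a b :=
    (hψc.mul hHc).intervalIntegrable a b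
  have h0 : ∫ x in a..b, H x = 0 := by
    rw [hFTC a ⟨le_rfl, hab.le⟩, ha, neg_zero]
  have hsplit : ∫ x in a..b, ψ x * H x = ∫ x in a..b, (ψ x - ψ a) * H x := by
    calc ∫ x in a..b, ψ x * H x
        = (∫ x in a..b, ψ x * H x) - ψ a * ∫ x in a..b, H x := by rw [h0]; ring
      _ = (∫ x in a..b, ψ x * H x) - ∫ x in a..b, ψ a * H x := by
          rw [intervalIntegral.integral_const_mul]
      _ = ∫ x in a..b, (ψ x * H x - ψ a * H x) :=
          (intervalIntegral.integral_sub hInt1 (hIntH.const_mul _)).symm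
      _ = ∫ x in a..b, (ψ x - ψ a) * H x :=
          intervalIntegral.integral_congr (fun x _ => by ring)
  have hptw : ∀ x ∈ Ioc a b, (ψ x - ψ a) * H x = ∫ t, Φ (x, t) ∂ν := by
    intro x hx
    have h1 : (fun t => Φ (x, t)) = (Iic x).indicator (fun _ => H x) := by
      funext t
      rw [hΦeval (x, t), Set.indicator_apply]
      simp only [mem_Iic]
    rw [h1, integral_indicator_const _ measurableSet_Iic]
    have h2 : ν (Iic x) = ENNReal.ofReal (ψ x - ψ a) := by
      rw [hν, Measure.restrict_apply measurableSet_Iic, inter_comm, Ioc_inter_Iic,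
        min_eq_right hx.2, S.measure_Ioc]
    rw [measureReal_def, h2, ENNReal.toReal_ofReal (sub_nonneg.2 (hψm hx.1.le))]
    simp [smul_eq_mul]
  have hC1 : ∫ x in Ioc a b, (ψ x - ψ a) * H x = ∫ x in Ioc a b, (∫ t, Φ (x, t) ∂ν) :=
    setIntegral_congr_fun measurableSet_Ioc hptw
  have hswap : ∫ x in Ioc a b, (∫ t, Φ (x, t) ∂ν) = ∫ t, (∫ x in Ioc a b, Φ (x, t)) ∂ν :=
    MeasureTheory.integral_integral_swap hΦint
  have hinner : ∀ t ∈ Ioc a b, (∫ x in Ioc a b, Φ (x, t)) = - h t := by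
    intro t ht
    have h1 : (fun x => Φ (x, t)) = (Ici t).indicator H := by
      funext x
      rw [hΦeval (x, t), Set.indicator_apply]
      simp only [mem_Ici]
    have h2 : Ici t ∩ Ioc a b = Icc t b := by
      ext x
      simp only [mem_inter_iff, mem_Ici, mem_Ioc, mem_Icc]
      exact ⟨fun h => ⟨h.1, h.2.2⟩, fun h => ⟨h.1, lt_of_lt_of_le ht.1 h.1, h.2⟩⟩
    rw [h1, MeasureTheory.integral_indicator measurableSet_Ici, Measure.restrict_restrict measurableSet_Ici,
      h2, integral_Icc_eq_integral_Ioc, ← intervalIntegral.integral_of_le ht.2]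
    exact hFTC t ⟨ht.1.le, ht.2⟩
  have hfinal : 0 ≤ ∫ t, (∫ x in Ioc a b, Φ (x, t)) ∂ν := by
    apply MeasureTheory.integral_nonneg_of_ae
    filter_upwards [ae_restrict_mem measurableSet_Ioc] with t ht
    simp only [Pi.zero_apply]
    rw [hinner t ht]
    have := hneg t ⟨ht.1.le, ht.2⟩
    linarith
  rw [hsplit, intervalIntegral.integral_of_le hab.le, hC1, hswap]
  exact hfinal

theorem higher_convex_curve_not_longer
    (xA xB : ℝ) (hx : xA < xB) (f g : ℝ → ℝ)
    (hfconv : ConvexOn ℝ (Set.Icc xA xB) f)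
    (hgconv : ConvexOn ℝ (Set.Icc xA xB) g)
    (hf : ContDiffOn ℝ 1 f (Set.Icc xA xB))
    (hg : ContDiffOn ℝ 1 g (Set.Icc xA xB))
    (hA : f xA = g xA) (hB : f xB = g xB)
    (hgt : ∀ x ∈ Set.Ioo xA xB, g x < f x) :
    (∫ x in xA..xB, Real.sqrt (1 + derivWithin f (Set.Icc xA xB) x ^ 2)) ≤
      ∫ x in xA..xB, Real.sqrt (1 + derivWithin g (Set.Icc xA xB) x ^ 2) := by
  have hud : UniqueDiffOn ℝ (Set.Icc xA xB) := uniqueDiffOn_Icc hx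
  set F' := derivWithin f (Set.Icc xA xB) with hF'
  set G' := derivWithin g (Set.Icc xA xB) with hG'
  have hF'c : ContinuousOn F' (Set.Icc xA xB) := hf.continuousOn_derivWithin hud le_rfl
  have hG'c : ContinuousOn G' (Set.Icc xA xB) := hg.continuousOn_derivWithin hud le_rfl
  have hF'm : MonotoneOn F' (Set.Icc xA xB) :=
    hfconv.monotoneOn_derivWithin (hf.differentiableOn one_ne_zero)
  set e : ℝ → ℝ := fun x => max xA (min x xB) with he
  have hem : Monotone e := fun x y hxy => max_le_max le_rfl (min_le_min hxy le_rfl)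
  have hemem : ∀ x, e x ∈ Set.Icc xA xB :=
    fun x => ⟨le_max_left _ _, max_le hx.le (min_le_right _ _)⟩
  have heid : ∀ x ∈ Set.Icc xA xB, e x = x := by
    intro x hx'
    rw [he]
    simp only
    rw [min_eq_left hx'.2, max_eq_right hx'.1]
  have hec : Continuous e := continuous_const.max (continuous_id.min continuous_const)
  set ψ : ℝ → ℝ := fun x => F' (e x) / Real.sqrt (1 + F' (e x) ^ 2) with hψ
  set H : ℝ → ℝ := fun x => G' (e x) - F' (e x) with hH
  have hF'e : Continuous fun x => F' (e x) := hF'c.comp_continuous hec hemem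
  have hG'e : Continuous fun x => G' (e x) := hG'c.comp_continuous hec hemem
  have hFe_mono : Monotone fun x => F' (e x) :=
    fun x y hxy => hF'm (hemem x) (hemem y) (hem hxy)
  have hψm : Monotone ψ := fun x y hxy => monotone_div_sqrt (hFe_mono hxy)
  have hψc : Continuous ψ :=
    hF'e.div (Real.continuous_sqrt.comp (continuous_const.add (hF'e.pow 2)))
      (fun x => (Real.sqrt_pos.2 (by positivity)).ne')
  have hHc : Continuous H := hG'e.sub hF'e
  obtain ⟨C, hC⟩ := isCompact_Icc.exists_bound_of_continuousOn (hG'c.sub hF'c)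
  have hbd : ∀ x, |H x| ≤ C := by
    intro x
    have := hC (e x) (hemem x)
    simpa [Real.norm_eq_abs, hH] using this
  set h : ℝ → ℝ := fun x => g x - f x with hh
  have hhc : ContinuousOn h (Set.Icc xA xB) := (hg.continuousOn).sub (hf.continuousOn)
  have hder : ∀ x ∈ Set.Ioo xA xB, HasDerivAt h (H x) x := by
    intro x hx'
    have hmemI : x ∈ Set.Icc xA xB := Set.Ioo_subset_Icc_self hx'
    have hnb : Set.Icc xA xB ∈ nhds x := Icc_mem_nhds hx'.1 hx'.2
    have hfd : DifferentiableAt ℝ f x := ((hf.differentiableOn one_ne_zero) x hmemI).differentiableAt hnb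
    have hgd : DifferentiableAt ℝ g x := ((hg.differentiableOn one_ne_zero) x hmemI).differentiableAt hnb
    have h1 : F' x = deriv f x := derivWithin_of_mem_nhds hnb
    have h2 : G' x = deriv g x := derivWithin_of_mem_nhds hnb
    have hda : HasDerivAt h (deriv g x - deriv f x) x := hgd.hasDerivAt.sub hfd.hasDerivAt
    have hEx : H x = deriv g x - deriv f x := by rw [hH]; simp only; rw [heid x hmemI, h1, h2]
    rw [hEx]
    exact hda
  have ha0 : h xA = 0 := by rw [hh]; simp [hA]
  have hb0 : h xB = 0 := by rw [hh]; simp [hB]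
  have hneg : ∀ x ∈ Set.Icc xA xB, h x ≤ 0 := by
    intro x hx'
    rcases eq_or_lt_of_le hx'.1 with rfl | h1
    · simp [hh, hA]
    rcases eq_or_lt_of_le hx'.2 with rfl | h2
    · simp [hh, hB]
    · exact sub_nonpos.2 (hgt x ⟨h1, h2⟩).le
  have key : 0 ≤ ∫ x in xA..xB, ψ x * H x :=
    integral_monotone_mul_deriv_nonneg hx hψm hψc hHc hbd hhc hder ha0 hb0 hneg
  have hpt : ∀ x ∈ Set.Icc xA xB,
      Real.sqrt (1 + F' x ^ 2) ≤ Real.sqrt (1 + G' x ^ 2) - ψ x * H x := by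
    intro x hx'
    have hcx := sqrt_one_add_sq_convex (F' x) (G' x)
    have hex := heid x hx'
    rw [hψ, hH]
    simp only [hex]
    nlinarith [hcx]
  have int1 : IntervalIntegrable (fun x => Real.sqrt (1 + F' x ^ 2)) volume xA xB := by
    apply ContinuousOn.intervalIntegrable
    rw [Set.uIcc_of_le hx.le]
    exact Real.continuous_sqrt.comp_continuousOn (continuousOn_const.add (hF'c.pow 2))
  have int2 : IntervalIntegrable (fun x => Real.sqrt (1 + G' x ^ 2)) volume xA xB := by
    apply ContinuousOn.intervalIntegrable
    rw [Set.uIcc_of_le hx.le]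
    exact Real.continuous_sqrt.comp_continuousOn (continuousOn_const.add (hG'c.pow 2))
  have intψH : IntervalIntegrable (fun x => ψ x * H x) volume xA xB :=
    (hψc.mul hHc).intervalIntegrable xA xB
  calc (∫ x in xA..xB, Real.sqrt (1 + F' x ^ 2))
      ≤ ∫ x in xA..xB, (Real.sqrt (1 + G' x ^ 2) - ψ x * H x) :=
        intervalIntegral.integral_mono_on hx.le int1 (int2.sub intψH) hpt
    _ = (∫ x in xA..xB, Real.sqrt (1 + G' x ^ 2)) - ∫ x in xA..xB, ψ x * H x :=
        intervalIntegral.integral_sub int2 intψH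
    _ ≤ ∫ x in xA..xB, Real.sqrt (1 + G' x ^ 2) := by linarith
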